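/- Let p be a prime, q a positive integer divisible by p, l an integer with gcd(l,p) = 1, and n any integer. Then | Σ_{b} e(l·b̄/q) | ≤ 1, where the sum runs over all b ∈ {1,…,q} with gcd(b,q) = 1 and b ≡ n (mod q/p), and b̄ ∈ {1,…,q} is the inverse of b modulo q. -/

import Mathlib

open Complex

/-- `e(z) = exp(2πiz)`. -/
noncomputable def eC (z : ℂ) : ℂ := Complex.exp (2 * Real.pi * Complex.I * z)

/-- The Kloosterman sum `Kl(m,n;c) = Σ_{x mod c, (x,c)=1} e((mx + nx*)/c)`,
where `x*` is the inverse of `x` modulo `c`. -/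
noncomputable def Kl (m n : ℤ) (c : ℕ) : ℂ :=
  ∑ x ∈ Finset.filter (fun x => Nat.gcd x c = 1) (Finset.Icc 1 c),
    eC ((((m * x + n * ((((x : ZMod c))⁻¹.val : ℕ) : ℤ) : ℤ) : ℝ) / c : ℝ))



lemma eC_norm (x : ℝ) : ‖eC (x:ℂ)‖ = 1 := by
  have h : 2 * Real.pi * Complex.I * (x:ℂ) = ((2*Real.pi*x : ℝ):ℂ) * Complex.I := by
    push_cast; ring
  rw [eC, h, Complex.norm_exp_ofReal_mul_I]

lemma eC_add (x y : ℂ) : eC (x + y) = eC x * eC y := by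
  simp [eC, mul_add, Complex.exp_add]

lemma eC_pow (z : ℂ) (k : ℕ) : eC z ^ k = eC (k * z) := by
  rw [eC, eC, ← Complex.exp_nat_mul]; ring_nf

lemma eC_int (k : ℤ) : eC (k:ℂ) = 1 := by
  rw [eC]
  have : 2 * Real.pi * Complex.I * (k:ℂ) = (k:ℂ) * (2 * Real.pi * Complex.I) := by ring
  rw [this]
  exact_mod_cast Complex.exp_int_mul_two_pi_mul_I k

lemma eC_geom (p : ℕ) (hp : 2 ≤ p) (l : ℤ) (hl : ¬ (p:ℤ) ∣ l) :
    ∑ j ∈ Finset.range p, (eC (((l:ℝ)/p : ℝ):ℂ)) ^ j = 0 := by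
  set ζ := eC (((l:ℝ)/p : ℝ):ℂ) with hζ
  have hp0 : (p:ℂ) ≠ 0 := Nat.cast_ne_zero.mpr (by omega)
  have hzp : ζ ^ p = 1 := by
    rw [hζ, eC_pow]
    have : (p:ℂ) * (((l:ℝ)/p : ℝ):ℂ) = ((l:ℤ):ℂ) := by
      push_cast; field_simp
    rw [this, eC_int]
  have hz1 : ζ ≠ 1 := by
    intro h
    rw [hζ, eC, Complex.exp_eq_one_iff] at h
    obtain ⟨k, hk⟩ := h
    have h2 : (2 * Real.pi * Complex.I : ℂ) ≠ 0 := by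
      simp [Real.pi_ne_zero, Complex.I_ne_zero]
    have hk' : (2 * Real.pi * Complex.I) * (((l:ℝ)/p : ℝ):ℂ)
        = (2 * Real.pi * Complex.I) * (k:ℂ) := by rw [hk]; ring
    have h3 : (((l:ℝ)/p : ℝ):ℂ) = (k:ℂ) := mul_left_cancel₀ h2 hk'
    have h4 : (l:ℂ) = (k:ℂ) * p := by
      push_cast at h3
      field_simp at h3
      linear_combination h3
    have h5 : l = k * p := by exact_mod_cast h4
    exact hl ⟨k, by rw [h5]; ring⟩
  rw [geom_sum_eq hz1, hzp]
  simp

lemma inv_key (q : ℕ) (hq2 : 2 ≤ q) (b : ℕ) (hb1 : 1 ≤ b) (hbq : b ≤ q)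
    (hb : Nat.Coprime b q) :
    Nat.Coprime ((b : ZMod q))⁻¹.val q ∧ 1 ≤ ((b : ZMod q))⁻¹.val ∧
      ((b : ZMod q))⁻¹.val < q ∧ b * ((b : ZMod q))⁻¹.val ≡ 1 [MOD q] ∧
      (((((b : ZMod q))⁻¹.val : ℕ) : ZMod q))⁻¹.val = b := by
  haveI : NeZero q := ⟨by omega⟩
  have hblt : b < q := lt_of_le_of_ne hbq (by rintro rfl; simp [Nat.Coprime, Nat.gcd_self] at hb; omega)
  set u : (ZMod q)ˣ := ZMod.unitOfCoprime b hb with hu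
  have hub : (u : ZMod q) = (b : ZMod q) := ZMod.coe_unitOfCoprime b hb
  have hinv : ((b : ZMod q))⁻¹ = ((u⁻¹ : (ZMod q)ˣ) : ZMod q) := by
    rw [← hub, ZMod.inv_coe_unit]
  set c := ((b : ZMod q))⁻¹.val with hc
  have hcop : Nat.Coprime c q := by rw [hc, hinv]; exact ZMod.val_coe_unit_coprime u⁻¹
  have hclt : c < q := ZMod.val_lt _
  have hc1 : 1 ≤ c := by
    rcases Nat.eq_zero_or_pos c with h | h
    · rw [h] at hcop; simp [Nat.coprime_zero_left] at hcop; omega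
    · exact h
  have hcast : ((c : ℕ) : ZMod q) = ((b : ZMod q))⁻¹ := by
    rw [hc, ZMod.natCast_val, ZMod.cast_id]
  have hmul : (b : ZMod q) * ((b : ZMod q))⁻¹ = 1 := ZMod.coe_mul_inv_eq_one b hb
  refine ⟨hcop, hc1, hclt, ?_, ?_⟩
  · have : ((b * c : ℕ) : ZMod q) = ((1 : ℕ) : ZMod q) := by
      push_cast
      rw [hcast, hmul]
    exact (ZMod.natCast_eq_natCast_iff _ _ _).mp this
  · rw [hcast, hinv, ZMod.inv_coe_unit, inv_inv, hub, ZMod.val_cast_of_lt hblt]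

lemma decomp (p r m c : ℕ) (hr0 : 0 < r) (hm1 : 1 ≤ m) (hmr : m ≤ r) (hc1 : 1 ≤ c)
    (hcq : c < p * r) (h : c % r = m % r) : ∃ j < p, c = m + j * r := by
  obtain ⟨k, hk⟩ : (r:ℤ) ∣ (c:ℤ) - (m:ℤ) :=
    (Nat.modEq_iff_dvd (n := r) (a := m) (b := c)).mp h.symm
  have hr0' : (0:ℤ) ≤ r := by exact_mod_cast hr0.le
  have hc1' : (1:ℤ) ≤ (c:ℤ) := by exact_mod_cast hc1
  have hmr' : (m:ℤ) ≤ (r:ℤ) := by exact_mod_cast hmr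
  have hcq' : (c:ℤ) < (p:ℤ) * (r:ℤ) := by exact_mod_cast hcq
  have hk0 : 0 ≤ k := by
    by_contra hneg
    push_neg at hneg
    have h2 : (r:ℤ) * k ≤ (r:ℤ) * (-1) :=
      mul_le_mul_of_nonneg_left (by omega) hr0'
    linarith
  refine ⟨k.toNat, ?_, ?_⟩
  · by_contra hge
    push_neg at hge
    have h1 : (p:ℤ) ≤ k := by omega
    have h2 : (r:ℤ) * p ≤ (r:ℤ) * k := mul_le_mul_of_nonneg_left h1 hr0'
    have h3 : (r:ℤ) * p = (p:ℤ) * r := mul_comm _ _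
    linarith
  · have h4 : (c:ℤ) = (m:ℤ) + (k.toNat:ℤ) * (r:ℤ) := by
      rw [Int.toNat_of_nonneg hk0]
      have := mul_comm (r:ℤ) k
      linarith
    exact_mod_cast h4

theorem stmt9 (p q : ℕ) (hp : p.Prime) (hq : 0 < q) (hpq : p ∣ q)
    (l : ℤ) (hl : Int.gcd l p = 1) (n : ℤ) :
    ‖∑ b ∈ Finset.filter
        (fun b => Nat.gcd b q = 1 ∧ (b : ℤ) % ((q / p : ℕ) : ℤ) = n % ((q / p : ℕ) : ℤ))
        (Finset.Icc 1 q),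
      eC (((l * ((((b : ZMod q))⁻¹.val : ℕ) : ℤ) : ℤ) : ℝ) / q)‖ ≤ 1 := by
  have hp2 : 2 ≤ p := hp.two_le
  have hq2 : 2 ≤ q := le_trans hp2 (Nat.le_of_dvd hq hpq)
  haveI : NeZero q := ⟨by omega⟩
  set r := q / p with hrdef
  have hqpr : q = p * r := (Nat.mul_div_cancel' hpq).symm
  have hr0 : 0 < r := by
    rcases Nat.eq_zero_or_pos r with h | h
    · rw [h, mul_zero] at hqpr; omega
    · exact h
  have hrq : r ∣ q := ⟨p, by rw [hqpr]; ring⟩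
  set S := Finset.filter
      (fun b => Nat.gcd b q = 1 ∧ (b : ℤ) % ((r : ℕ) : ℤ) = n % ((r : ℕ) : ℤ))
      (Finset.Icc 1 q) with hSdef
  set g : ℕ → ℂ := fun c => eC ((((l * (c : ℤ) : ℤ) : ℝ) : ℂ) / (q : ℂ)) with hgdef
  show ‖∑ b ∈ S, g (((b : ZMod q))⁻¹.val)‖ ≤ 1
  rcases Finset.eq_empty_or_nonempty S with hSe | hSne
  · rw [hSe]; simp
  -- extract m
  obtain ⟨b0, hb0⟩ := hSne
  rw [hSdef, Finset.mem_filter, Finset.mem_Icc] at hb0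
  obtain ⟨⟨hb01, hb0q⟩, hb0cop, hb0n⟩ := hb0
  obtain ⟨hc0cop, hc01, hc0lt, hc0mul, hc0inv⟩ := inv_key q hq2 b0 hb01 hb0q hb0cop
  set c0 := ((b0 : ZMod q))⁻¹.val with hc0def
  set m := if c0 % r = 0 then r else c0 % r with hmdef
  have hcr : c0 % r < r := Nat.mod_lt _ hr0
  have hm1 : 1 ≤ m := by rw [hmdef]; split_ifs <;> omega
  have hmr : m ≤ r := by rw [hmdef]; split_ifs <;> omega
  have hmmod : m % r = c0 % r := by
    rw [hmdef]; split_ifs with h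
    · rw [Nat.mod_self, h]
    · exact Nat.mod_mod_of_dvd _ dvd_rfl
  -- ZMod r facts
  have hb0r : ((b0 : ℕ) : ZMod r) = ((n : ℤ) : ZMod r) := by
    have := (ZMod.intCast_eq_intCast_iff (b0 : ℤ) n r).mpr hb0n
    push_cast at this ⊢
    exact this
  have hmulr : ((b0 : ℕ) : ZMod r) * ((c0 : ℕ) : ZMod r) = 1 := by
    have h1 : b0 * c0 ≡ 1 [MOD r] := Nat.ModEq.of_dvd hrq hc0mul
    have := (ZMod.natCast_eq_natCast_iff _ _ r).mpr h1
    push_cast at this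
    exact this
  have hc0r : ((c0 : ℕ) : ZMod r) = ((m : ℕ) : ZMod r) :=
    (ZMod.natCast_eq_natCast_iff _ _ _).mpr hmmod.symm
  have hmn : ((m : ℕ) : ZMod r) * ((n : ℤ) : ZMod r) = 1 := by
    rw [← hc0r, ← hb0r, mul_comm]; exact hmulr
  have hmcop : Nat.Coprime m r := by
    have h1 : Nat.Coprime c0 r := Nat.Coprime.coprime_dvd_right hrq hc0cop
    have h2 : Nat.gcd r m = Nat.gcd r c0 := by
      rw [Nat.gcd_rec r m, Nat.gcd_rec r c0, hmmod]
    have h3 := h1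
    rw [Nat.Coprime, Nat.gcd_comm] at h3 ⊢
    rw [h2]; exact h3
  -- gcd characterization
  have hchar : ∀ j : ℕ, ¬ p ∣ (m + j * r) → Nat.Coprime (m + j * r) q := by
    intro j hj
    rw [hqpr]
    exact Nat.Coprime.mul_right ((hp.coprime_iff_not_dvd.mpr hj).symm)
      ((Nat.coprime_add_mul_right_left m r j).mpr hmcop)
  have hchar2 : ∀ j : ℕ, Nat.Coprime (m + j * r) q → ¬ p ∣ (m + j * r) := by
    intro j h hdvd
    have h1 : p ∣ Nat.gcd (m + j * r) q := Nat.dvd_gcd hdvd hpq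
    rw [h] at h1
    have := Nat.le_of_dvd one_pos h1
    omega
  -- the index maps
  set F := Finset.filter (fun j => Nat.gcd (m + j * r) q = 1) (Finset.range p) with hFdef
  set im : ℕ → ℕ := fun b => ((((b : ZMod q))⁻¹.val) - m) / r with himdef
  set jm : ℕ → ℕ := fun j => (((m + j * r : ℕ) : ZMod q))⁻¹.val with hjmdef
  have hdivj : ∀ j : ℕ, ((m + j * r) - m) / r = j := by
    intro j
    rw [Nat.add_sub_cancel_left, Nat.mul_div_cancel _ hr0]
  have key1 : ∀ a ∈ S, (((a : ZMod q))⁻¹.val = m + (im a) * r) ∧ im a ∈ F ∧ jm (im a) = a := by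
    intro a ha
    rw [hSdef, Finset.mem_filter, Finset.mem_Icc] at ha
    obtain ⟨⟨ha1, haq⟩, hacop, han⟩ := ha
    obtain ⟨hccop, hcl1, hclt, hcmul, hcinv⟩ := inv_key q hq2 a ha1 haq hacop
    set c := ((a : ZMod q))⁻¹.val with hcdef
    have har : ((a : ℕ) : ZMod r) = ((n : ℤ) : ZMod r) := by
      have := (ZMod.intCast_eq_intCast_iff (a : ℤ) n r).mpr han
      push_cast at this ⊢
      exact this
    have hmulr' : ((n : ℤ) : ZMod r) * ((c : ℕ) : ZMod r) = 1 := by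
      have h1 : a * c ≡ 1 [MOD r] := Nat.ModEq.of_dvd hrq hcmul
      have := (ZMod.natCast_eq_natCast_iff _ _ r).mpr h1
      push_cast at this
      rw [← har]; exact this
    have hcm : ((c : ℕ) : ZMod r) = ((m : ℕ) : ZMod r) := by
      calc ((c : ℕ) : ZMod r) = (((m : ℕ) : ZMod r) * ((n : ℤ) : ZMod r)) * ((c : ℕ) : ZMod r) := by
            rw [hmn, one_mul]
        _ = ((m : ℕ) : ZMod r) * (((n : ℤ) : ZMod r) * ((c : ℕ) : ZMod r)) := by ring
        _ = ((m : ℕ) : ZMod r) := by rw [hmulr', mul_one]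
    have hmodc : c % r = m % r := (ZMod.natCast_eq_natCast_iff _ _ _).mp hcm
    have hcltpr : c < p * r := by rw [← hqpr]; exact hclt
    obtain ⟨j, hjp, hcj⟩ := decomp p r m c hr0 hm1 hmr hcl1 hcltpr hmodc
    have hiaj : im a = j := by
      rw [himdef]
      simp only []
      rw [← hcdef, hcj, hdivj]
    refine ⟨?_, ?_, ?_⟩
    · rw [hiaj, ← hcj]
    · rw [hiaj, hFdef, Finset.mem_filter, Finset.mem_range]
      exact ⟨hjp, by rw [← hcj]; exact hccop⟩
    · rw [hiaj, hjmdef]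
      simp only []
      rw [← hcj]
      exact hcinv
  have key2 : ∀ j ∈ F, jm j ∈ S ∧ im (jm j) = j := by
    intro j hj
    rw [hFdef, Finset.mem_filter, Finset.mem_range] at hj
    obtain ⟨hjp, hjcop⟩ := hj
    have hcj1 : 1 ≤ m + j * r := by omega
    have hcjq : m + j * r ≤ q := by
      have h1 : j + 1 ≤ p := hjp
      have h2 : (j + 1) * r ≤ p * r := Nat.mul_le_mul_right r h1
      have h3 : (j + 1) * r = j * r + r := by ring
      omega
    obtain ⟨hbcop, hbl1, hblt, hbmul, hbinv⟩ := inv_key q hq2 (m + j * r) hcj1 hcjq hjcop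
    set b := (((m + j * r : ℕ) : ZMod q))⁻¹.val with hbdef
    have hcjr : (((m + j * r : ℕ) : ℕ) : ZMod r) = ((m : ℕ) : ZMod r) := by
      push_cast [ZMod.natCast_self]
      ring
    have hmulr' : ((m : ℕ) : ZMod r) * ((b : ℕ) : ZMod r) = 1 := by
      have h1 : (m + j * r) * b ≡ 1 [MOD r] := Nat.ModEq.of_dvd hrq hbmul
      have := (ZMod.natCast_eq_natCast_iff _ _ r).mpr h1
      push_cast at this
      push_cast at hcjr
      rw [← hcjr]; exact this
    have hbn : ((b : ℕ) : ZMod r) = ((n : ℤ) : ZMod r) := by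
      calc ((b : ℕ) : ZMod r)
          = (((n : ℤ) : ZMod r) * ((m : ℕ) : ZMod r)) * ((b : ℕ) : ZMod r) := by
            rw [mul_comm ((n : ℤ) : ZMod r) _, hmn, one_mul]
        _ = ((n : ℤ) : ZMod r) * (((m : ℕ) : ZMod r) * ((b : ℕ) : ZMod r)) := by ring
        _ = ((n : ℤ) : ZMod r) := by rw [hmulr', mul_one]
    constructor
    · rw [hjmdef]
      simp only []
      rw [← hbdef, hSdef, Finset.mem_filter, Finset.mem_Icc]
      refine ⟨⟨hbl1, hblt.le⟩, hbcop, ?_⟩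
      have : ((b : ℤ) : ZMod r) = ((n : ℤ) : ZMod r) := by
        push_cast
        push_cast at hbn
        exact hbn
      exact (ZMod.intCast_eq_intCast_iff _ _ _).mp this
    · rw [himdef, hjmdef]
      simp only []
      rw [← hbdef, hbinv, hdivj]
  -- reindex
  have hreindex : ∑ b ∈ S, g (((b : ZMod q))⁻¹.val) = ∑ j ∈ F, g (m + j * r) := by
    refine Finset.sum_nbij' im jm (fun a ha => (key1 a ha).2.1) (fun j hj => (key2 j hj).1)
      (fun a ha => (key1 a ha).2.2) (fun j hj => (key2 j hj).2) ?_
    intro a ha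
    rw [(key1 a ha).1]
  rw [hreindex]
  -- evaluate
  set ζ := eC ((((l : ℝ) / (p : ℝ) : ℝ)) : ℂ) with hζdef
  set A := eC ((((l * (m : ℤ) : ℤ) : ℝ) / (q : ℕ) : ℝ) : ℂ) with hAdef
  have hp0 : (p : ℂ) ≠ 0 := Nat.cast_ne_zero.mpr (by omega)
  have hr0' : (r : ℂ) ≠ 0 := Nat.cast_ne_zero.mpr (by omega)
  have hq0 : (q : ℂ) ≠ 0 := Nat.cast_ne_zero.mpr (by omega)
  have hg2 : ∀ j : ℕ, g (m + j * r) = A * ζ ^ j := by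
    intro j
    rw [hgdef, hAdef, hζdef]
    simp only []
    rw [eC_pow, ← eC_add]
    congr 1
    have hqc : (q : ℂ) = (p : ℂ) * (r : ℂ) := by exact_mod_cast congrArg (Nat.cast : ℕ → ℂ) hqpr
    field_simp [hqc]
    push_cast
    rw [hqc]
    field_simp
  have hA1 : ‖A‖ = 1 := by rw [hAdef]; exact eC_norm _
  have hζ1 : ‖ζ‖ = 1 := by rw [hζdef]; exact eC_norm _
  have hpl : ¬ ((p : ℤ) ∣ l) := by
    intro h
    have h1 : (p : ℤ) ∣ (Int.gcd l p : ℤ) := Int.dvd_coe_gcd h dvd_rfl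
    rw [hl] at h1
    have := Int.le_of_dvd one_pos h1
    omega
  have hgeom := eC_geom p hp2 l hpl
  rw [show (∑ j ∈ F, g (m + j * r)) = A * ∑ j ∈ F, ζ ^ j by
    rw [Finset.mul_sum]; exact Finset.sum_congr rfl fun j _ => hg2 j]
  by_cases hpr : p ∣ r
  · -- F = range p
    have hpm : ¬ p ∣ m := by
      intro h
      have h1 : p ∣ Nat.gcd m r := Nat.dvd_gcd h hpr
      rw [hmcop] at h1
      have := Nat.le_of_dvd one_pos h1
      omega
    have hF : F = Finset.range p := by
      rw [hFdef]
      apply Finset.filter_true_of_mem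
      intro j hj
      apply hchar
      intro hd
      have h1 : p ∣ j * r := Dvd.dvd.mul_left hpr j
      exact hpm ((Nat.dvd_add_iff_left h1).mpr hd)
    rw [hF, hgeom, mul_zero, norm_zero]
    norm_num
  · -- F = erase j0
    haveI : NeZero p := ⟨by omega⟩
    have hrpcop : Nat.Coprime r p := (hp.coprime_iff_not_dvd.mpr hpr).symm
    set j0 := ((-((m : ℕ) : ZMod p)) * (((r : ℕ) : ZMod p))⁻¹).val with hj0def
    have hj0lt : j0 < p := ZMod.val_lt _
    have hrp1 : ((r : ℕ) : ZMod p) * (((r : ℕ) : ZMod p))⁻¹ = 1 := ZMod.coe_mul_inv_eq_one r hrpcop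
    have hj0cast : ((j0 : ℕ) : ZMod p) = (-((m : ℕ) : ZMod p)) * (((r : ℕ) : ZMod p))⁻¹ := by
      rw [hj0def, ZMod.natCast_val, ZMod.cast_id]
    have hdvd_iff : ∀ j : ℕ, j < p → (p ∣ (m + j * r) ↔ j = j0) := by
      intro j hjp
      rw [← ZMod.natCast_eq_zero_iff (m + j * r) p]
      constructor
      · intro h
        push_cast at h
        have h1 : ((j : ℕ) : ZMod p) * ((r : ℕ) : ZMod p) = -((m : ℕ) : ZMod p) := by
          linear_combination h
        have h2 : ((j : ℕ) : ZMod p) = ((j0 : ℕ) : ZMod p) := by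
          rw [hj0cast, ← h1]
          calc ((j : ℕ) : ZMod p)
              = ((j : ℕ) : ZMod p) * (((r : ℕ) : ZMod p) * (((r : ℕ) : ZMod p))⁻¹) := by
                rw [hrp1, mul_one]
            _ = ((j : ℕ) : ZMod p) * ((r : ℕ) : ZMod p) * (((r : ℕ) : ZMod p))⁻¹ := by ring
        have := congrArg ZMod.val h2
        rwa [ZMod.val_cast_of_lt hjp, ZMod.val_cast_of_lt hj0lt] at this
      · rintro rfl
        push_cast
        rw [hj0cast]
        calc ((m : ℕ) : ZMod p) + -((m : ℕ) : ZMod p) * (((r : ℕ) : ZMod p))⁻¹ * ((r : ℕ) : ZMod p)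
            = ((m : ℕ) : ZMod p) + -((m : ℕ) : ZMod p) * (((r : ℕ) : ZMod p) * (((r : ℕ) : ZMod p))⁻¹) := by
              ring
          _ = 0 := by rw [hrp1]; ring
    have hF : F = (Finset.range p).erase j0 := by
      rw [hFdef]
      ext j
      rw [Finset.mem_filter, Finset.mem_range, Finset.mem_erase, Finset.mem_range]
      constructor
      · rintro ⟨hjp, hcop⟩
        refine ⟨?_, hjp⟩
        intro hjj0
        exact hchar2 j hcop ((hdvd_iff j hjp).mpr hjj0)
      · rintro ⟨hne, hjp⟩
        refine ⟨hjp, hchar j ?_⟩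
        intro hd
        exact hne ((hdvd_iff j hjp).mp hd)
    have hsumF : ∑ j ∈ F, ζ ^ j = -ζ ^ j0 := by
      rw [hF]
      have h1 := Finset.sum_erase_add (Finset.range p) (fun j => ζ ^ j)
        (Finset.mem_range.mpr hj0lt)
      rw [hgeom] at h1
      linear_combination h1
    rw [hsumF]
    rw [norm_mul, hA1, one_mul, norm_neg, norm_pow, hζ1, one_pow]
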